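/- For every even natural number n ≥ 2, the closed-chain AND-OR network whose run-length list consists of n + 2 copies of 2 satisfies 𝔉c([2,2,…,2]) = b_{n+2} + b_n, where (b_k) is the Fibonacci-type sequence with b_0 = b_1 = 1 and b_k = b_{k−1} + b_{k−2} (equivalently, 𝔉c([2,2,…,2]) = Fib(n+3) + Fib(n+1), with Fib(1) = Fib(2) = 1). -/

import Mathlib

/-- The open-chain AND-OR network map determined by an operator list `ops`
(`true` = AND, `false` = OR), on `ops.length + 2` nodes. -/
def chainMap (ops : List Bool) (x : Fin (ops.length + 2) → Bool) :
    Fin (ops.length + 2) → Bool := fun i =>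
  if h0 : (i : ℕ) = 0 then x ⟨1, by omega⟩
  else if hn : (i : ℕ) = ops.length + 1 then x ⟨ops.length, by omega⟩
  else
    have hi : 1 ≤ (i : ℕ) ∧ (i : ℕ) ≤ ops.length := by
      have := i.isLt; omega
    if ops.get ⟨(i : ℕ) - 1, by omega⟩
    then x ⟨(i : ℕ) - 1, by omega⟩ && x ⟨(i : ℕ) + 1, by omega⟩
    else x ⟨(i : ℕ) - 1, by omega⟩ || x ⟨(i : ℕ) + 1, by omega⟩

/-- `F ops` is the number of fixed points of the open-chain AND-OR network. -/
noncomputable def F (ops : List Bool) : ℕ :=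
  Nat.card {x : Fin (ops.length + 2) → Bool // chainMap ops x = x}

/-- Run-length encoding: block `j` (1-based) consists of `k_j` copies of
`true` if `j` is odd and `false` if `j` is even. -/
def runOps : List ℕ → List Bool
  | [] => []
  | k :: t => List.replicate k true ++ (runOps t).map (fun b => !b)

/-- `Fr L` = 𝔉(L), the number of fixed points of the open-chain AND-OR
network with run-length list `L`. -/
noncomputable def Fr (L : List ℕ) : ℕ := F (runOps L)

/-- The closed-chain AND-OR network map on `ZMod n` determined by
`ops : ZMod n → Bool` (`true` = AND, `false` = OR). -/
def cycleMap {n : ℕ} (ops : ZMod n → Bool) (x : ZMod n → Bool) :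
    ZMod n → Bool := fun i =>
  if ops i then x (i - 1) && x (i + 1) else x (i - 1) || x (i + 1)

/-- `Fc ops` is the number of fixed points of the closed-chain AND-OR network. -/
noncomputable def Fc {n : ℕ} (ops : ZMod n → Bool) : ℕ :=
  Nat.card {x : ZMod n → Bool // cycleMap ops x = x}

/-- The cyclic operator assignment for run-length list `L`: going cyclically
from index `0`, a block of `k_j` consecutive values equal to `true` if `j` is
odd and `false` if `j` is even. -/
def cOps (L : List ℕ) : ZMod L.sum → Bool :=
  fun i => (runOps L).getD i.val false

/-- `Frc L` = 𝔉c(L), the number of fixed points of the closed-chain AND-OR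
network with run-length list `L`. -/
noncomputable def Frc (L : List ℕ) : ℕ := Fc (cOps L)

set_option linter.unreachableTactic false
set_option linter.unusedTactic false
set_option linter.unusedSectionVars false

/-- the closed chain with run-length list `n + 2` copies of
`2` (`n ≥ 2` even) has `Fib (n+3) + Fib (n+1)` fixed points. -/

abbrev pathGood (k : ℕ) : Type :=
  {v : Fin k → Bool // ∀ i : ℕ, ∀ h : i + 1 < k,
    ¬(v ⟨i, by omega⟩ = true ∧ v ⟨i + 1, h⟩ = true)}

def pgF {k : ℕ} (g : pathGood (k + 1) ⊕ pathGood k) : pathGood (k + 2) :=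
  match g with
  | Sum.inl ⟨w, hw⟩ => ⟨fun i => if h : i.val = 0 then false else w ⟨i.val - 1, by omega⟩, by
      intro i h hc
      rcases hc with ⟨h1, h2⟩
      simp only at h1 h2
      rcases Nat.eq_zero_or_pos i with hi | hi
      · rw [dif_pos hi] at h1; exact Bool.false_ne_true h1
      · rw [dif_neg (by omega)] at h1
        rw [dif_neg (by omega)] at h2
        have he : (⟨i + 1 - 1, by omega⟩ : Fin (k + 1)) = ⟨(i - 1) + 1, by omega⟩ :=
          Fin.ext (by simp; omega)
        rw [he] at h2
        exact hw (i - 1) (by omega) ⟨h1, h2⟩⟩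
  | Sum.inr ⟨w, hw⟩ => ⟨fun i => if h0 : i.val = 0 then true else
      if h1 : i.val = 1 then false else w ⟨i.val - 2, by omega⟩, by
      intro i h hc
      rcases hc with ⟨h1, h2⟩
      simp only at h1 h2
      rcases Nat.lt_or_ge i 2 with hi | hi
      · interval_cases i <;> simp_all
      · rw [dif_neg (by omega), dif_neg (by omega)] at h1
        rw [dif_neg (by omega), dif_neg (by omega)] at h2
        have he : (⟨i + 1 - 2, by omega⟩ : Fin k) = ⟨(i - 2) + 1, by omega⟩ :=
          Fin.ext (by simp; omega)
        rw [he] at h2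
        exact hw (i - 2) (by omega) ⟨h1, h2⟩⟩

theorem pgF_bij {k : ℕ} : Function.Bijective (pgF (k := k)) := by
  constructor
  · rintro (⟨w, hw⟩ | ⟨w, hw⟩) (⟨u, hu⟩ | ⟨u, hu⟩) hequ <;>
      simp only [pgF, Subtype.mk.injEq] at hequ
    · congr 1
      ext1
      ext i
      have := congrFun hequ ⟨i.val + 1, by omega⟩
      simp only at this
      rw [dif_neg (by omega), dif_neg (by omega)] at this
      simpa using this
    · have := congrFun hequ ⟨0, by omega⟩
      simp at this
    · have := congrFun hequ ⟨0, by omega⟩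
      simp at this
    · congr 1
      ext1
      ext i
      have := congrFun hequ ⟨i.val + 2, by omega⟩
      simp only at this
      rw [dif_neg (by omega), dif_neg (by omega), dif_neg (by omega), dif_neg (by omega)] at this
      simpa using this
  · rintro ⟨v, hv⟩
    by_cases h0 : v ⟨0, by omega⟩ = true
    · refine ⟨Sum.inr ⟨fun i => v ⟨i.val + 2, by omega⟩, ?_⟩, ?_⟩
      · intro i h hc
        exact hv (i + 2) (by omega) ⟨hc.1, hc.2⟩
      · simp only [pgF]
        ext i : 2
        simp only
        have h1 : v ⟨1, by omega⟩ = false := by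
          by_contra hcon
          exact hv 0 (by omega) ⟨h0, by simpa using hcon⟩
        rcases Nat.lt_or_ge i.val 2 with hi | hi
        · have : i.val = 0 ∨ i.val = 1 := by omega
          rcases this with h | h
          · rw [dif_pos h, ← h0]; congr 1; exact Fin.ext h.symm
          · rw [dif_neg (by omega), dif_pos h, ← h1]; congr 1; exact Fin.ext h.symm
        · rw [dif_neg (by omega), dif_neg (by omega)]
          congr 1; exact Fin.ext (by simp; omega)
    · refine ⟨Sum.inl ⟨fun i => v ⟨i.val + 1, by omega⟩, ?_⟩, ?_⟩
      · intro i h hc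
        exact hv (i + 1) (by omega) ⟨hc.1, hc.2⟩
      · simp only [pgF]
        ext i : 2
        simp only
        rcases Nat.eq_zero_or_pos i.val with hi | hi
        · rw [dif_pos hi]
          have : v ⟨0, by omega⟩ = false := by simpa using h0
          rw [← this]; congr 1; exact Fin.ext hi.symm
        · rw [dif_neg (by omega)]
          congr 1; exact Fin.ext (by simp; omega)

theorem pathGood_card : ∀ k, Nat.card (pathGood k) = Nat.fib (k + 2) := by
  have h0 : Nat.card (pathGood 0) = 1 := by
    rw [Nat.card_eq_one_iff_unique]
    constructor
    · constructor
      intro a b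
      ext i
      exact absurd i.2 (by omega)
    · exact ⟨⟨fun i => false, by intro i h; omega⟩⟩
  have h1 : Nat.card (pathGood 1) = 2 := by
    have e : pathGood 1 ≃ Bool :=
      { toFun := fun v => v.1 ⟨0, by omega⟩
        invFun := fun b => ⟨fun _ => b, by intro i h; omega⟩
        left_inv := fun v => by
          ext i
          have : i = ⟨0, by omega⟩ := by ext; omega
          rw [this]
        right_inv := fun b => rfl }
    rw [Nat.card_congr e]
    simp
  have key : ∀ k, Nat.card (pathGood k) = Nat.fib (k + 2) ∧
      Nat.card (pathGood (k + 1)) = Nat.fib (k + 3) := by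
    intro k
    induction k with
    | zero => exact ⟨h0, h1⟩
    | succ k ih =>
      refine ⟨ih.2, ?_⟩
      rw [← Nat.card_congr (Equiv.ofBijective _ (pgF_bij (k := k))), Nat.card_sum, ih.1, ih.2]
      have e1 : Nat.fib (k + 2 + 2) = Nat.fib (k + 2) + Nat.fib (k + 2 + 1) :=
        Nat.fib_add_two
      have e2 : Nat.fib (k + 1 + 2) = Nat.fib (k + 1) + Nat.fib (k + 1 + 1) :=
        Nat.fib_add_two
      have h4 : Nat.fib (k + 1 + 3) = Nat.fib (k + 2 + 2) := rfl
      have h5 : Nat.fib (k + 3) = Nat.fib (k + 2 + 1) := rfl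
      have h6 : Nat.fib (k + 1 + 2) = Nat.fib (k + 2 + 1) := rfl
      have h7 : Nat.fib (k + 1 + 1) = Nat.fib (k + 2) := rfl
      omega
  exact fun k => (key k).1



abbrev cycGood (m : ℕ) : Type :=
  {z : ZMod m → Bool // ∀ j : ZMod m, ¬(z j = true ∧ z (j + 1) = true)}

-- nat reformulation
theorem cycCond_iff {m : ℕ} [NeZero m] (z : ZMod m → Bool) :
    (∀ j : ZMod m, ¬(z j = true ∧ z (j + 1) = true)) ↔
      (∀ k : ℕ, k < m → ¬(z ↑k = true ∧ z ↑(k + 1) = true)) := by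
  constructor
  · intro h k _
    have := h ↑k
    rwa [← Nat.cast_add_one] at this
  · intro h j
    have hj : ((j.val : ℕ) : ZMod m) = j := ZMod.natCast_rightInverse j
    have := h j.val (ZMod.val_lt j)
    rwa [hj, Nat.cast_add, Nat.cast_one, hj] at this

theorem val_natCast_lt {m : ℕ} [NeZero m] {k : ℕ} (h : k < m) :
    ((k : ZMod m)).val = k := ZMod.val_cast_of_lt h



def cycB1 (a : ℕ) : {p : cycGood (a + 4) // p.1 0 = false} ≃ pathGood (a + 3) where
  toFun p := ⟨fun i => p.1.1 ↑(i.val + 1), by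
    intro i h hc
    exact (cycCond_iff p.1.1).mp p.1.2 (i + 1) (by omega) ⟨hc.1, hc.2⟩⟩
  invFun w := ⟨⟨fun j => if j.val = 0 then false else w.1 ⟨j.val - 1, by
      have := j.val_lt; omega⟩, by
    rw [cycCond_iff]
    intro k hk hc
    rcases hc with ⟨h1, h2⟩
    have hv1 : ((k : ZMod (a + 4))).val = k := val_natCast_lt hk
    simp only [hv1] at h1
    by_cases hk0 : k = 0
    · rw [if_pos hk0] at h1; exact Bool.false_ne_true h1
    rw [if_neg hk0] at h1
    by_cases hke : k + 1 = a + 4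
    · have hz : (((k + 1 : ℕ)) : ZMod (a + 4)) = 0 := by
        rw [hke]; exact_mod_cast ZMod.natCast_self (a + 4)
      rw [hz] at h2
      simp only [ZMod.val_zero, if_pos rfl] at h2
      exact Bool.false_ne_true h2
    · have hv2 : (((k + 1 : ℕ)) : ZMod (a + 4)).val = k + 1 := val_natCast_lt (by omega)
      simp only [hv2, if_neg (by omega : ¬(k + 1 = 0))] at h2
      refine w.2 (k - 1) (by omega) ⟨h1, ?_⟩
      have he : (⟨k + 1 - 1, by omega⟩ : Fin (a + 3)) = ⟨(k - 1) + 1, by omega⟩ :=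
        Fin.ext (by first | omega | (simp; omega) | simp)
      rw [← he]
      exact h2⟩, by simp⟩
  left_inv p := by
    rcases p with ⟨⟨z, hz⟩, h0⟩
    apply Subtype.ext
    apply Subtype.ext
    funext j
    simp only
    by_cases hj : j.val = 0
    · rw [if_pos hj]
      have hj0 : j = 0 := by
        have := ZMod.natCast_rightInverse (n := a + 4) j
        rw [← this, hj]; simp
      rw [hj0]
      exact (h0 : z 0 = false).symm
    · rw [if_neg hj]
      have heq : ((j.val - 1 + 1 : ℕ) : ZMod (a + 4)) = j := by
        rw [show j.val - 1 + 1 = j.val by omega]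
        exact ZMod.natCast_rightInverse j
      simp only [heq]
  right_inv w := by
    apply Subtype.ext
    funext i
    simp only
    have hv : (((i.val + 1 : ℕ)) : ZMod (a + 4)).val = i.val + 1 :=
      val_natCast_lt (by have := i.isLt; omega)
    simp only [hv, if_neg (Nat.succ_ne_zero i.val)]
    exact congrArg _ (Fin.ext (by first | omega | (simp; omega) | simp))

def cycB2 (a : ℕ) : {p : cycGood (a + 4) // p.1 0 = true} ≃ pathGood (a + 1) where
  toFun p := ⟨fun i => p.1.1 ↑(i.val + 2), by
    intro i h hc
    refine (cycCond_iff p.1.1).mp p.1.2 (i + 2) (by omega) ⟨hc.1, ?_⟩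
    have h3 : i + 2 + 1 = (i + 1) + 2 := by omega
    rw [h3]
    exact hc.2⟩
  invFun w := ⟨⟨fun j => if j.val = 0 then true else if j.val = 1 then false else
      if j.val = a + 3 then false else w.1 ⟨min (j.val - 2) a, by omega⟩, by
    rw [cycCond_iff]
    intro k hk hc
    rcases hc with ⟨h1, h2⟩
    have hv1 : ((k : ZMod (a + 4))).val = k := val_natCast_lt hk
    simp only [hv1] at h1
    by_cases hke : k + 1 = a + 4
    · have hz : (((k + 1 : ℕ)) : ZMod (a + 4)) = 0 := by
        rw [hke]; exact_mod_cast ZMod.natCast_self (a + 4)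
      rw [hz] at h2
      rw [if_neg (show ¬(k = 0) by omega), if_neg (show ¬(k = 1) by omega),
        if_pos (show k = a + 3 by omega)] at h1
      exact Bool.false_ne_true h1
    have hv2 : (((k + 1 : ℕ)) : ZMod (a + 4)).val = k + 1 := val_natCast_lt (by omega)
    simp only [hv2] at h2
    by_cases hk0 : k = 0
    · rw [if_neg (show ¬(k + 1 = 0) by omega), if_pos (show k + 1 = 1 by omega)] at h2
      exact Bool.false_ne_true h2
    by_cases hk1 : k = 1
    · rw [if_neg hk0, if_pos hk1] at h1
      exact Bool.false_ne_true h1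
    by_cases hka : k = a + 3
    · rw [if_neg hk0, if_neg hk1, if_pos hka] at h1
      exact Bool.false_ne_true h1
    by_cases hka2 : k = a + 2
    · rw [if_neg (show ¬(k + 1 = 0) by omega), if_neg (show ¬(k + 1 = 1) by omega),
        if_pos (show k + 1 = a + 3 by omega)] at h2
      exact Bool.false_ne_true h2
    · rw [if_neg hk0, if_neg hk1, if_neg hka] at h1
      rw [if_neg (show ¬(k + 1 = 0) by omega), if_neg (show ¬(k + 1 = 1) by omega),
        if_neg (show ¬(k + 1 = a + 3) by omega)] at h2
      refine w.2 (k - 2) (by omega) ⟨?_, ?_⟩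
      · have he : (⟨min (k - 2) a, by omega⟩ : Fin (a + 1)) = ⟨k - 2, by omega⟩ :=
          Fin.ext (by first | omega | (simp; omega) | simp)
        rw [← he]
        exact h1
      · have he : (⟨min (k + 1 - 2) a, by omega⟩ : Fin (a + 1)) = ⟨(k - 2) + 1, by omega⟩ :=
          Fin.ext (by first | omega | (simp; omega) | simp)
        rw [← he]
        exact h2⟩, by simp⟩
  left_inv p := by
    rcases p with ⟨⟨z, hz⟩, h0⟩
    have hz0 : z 0 = true := h0
    apply Subtype.ext
    apply Subtype.ext
    funext j
    simp only
    have hjcast : ((j.val : ℕ) : ZMod (a + 4)) = j := ZMod.natCast_rightInverse j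
    by_cases hj0 : j.val = 0
    · rw [if_pos hj0]
      have hje : j = 0 := by rw [← hjcast, hj0]; simp
      rw [hje]
      exact hz0.symm
    rw [if_neg hj0]
    by_cases hj1 : j.val = 1
    · rw [if_pos hj1]
      have h01 := hz 0
      rw [zero_add] at h01
      have hje : j = 1 := by rw [← hjcast, hj1]; simp
      rw [hje]
      cases hb : z 1
      · rfl
      · exact absurd ⟨hz0, hb⟩ h01
    rw [if_neg hj1]
    by_cases hja : j.val = a + 3
    · rw [if_pos hja]
      have hlast := hz ↑(a + 3 : ℕ)
      have hwrap : ((a + 3 : ℕ) : ZMod (a + 4)) + 1 = 0 := by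
        have h5 : (((a + 4 : ℕ)) : ZMod (a + 4)) = 0 := ZMod.natCast_self (a + 4)
        rw [← h5]; push_cast; ring
      rw [hwrap] at hlast
      have hje : j = ↑(a + 3 : ℕ) := by rw [← hjcast, hja]
      rw [hje]
      cases hb : z ↑(a + 3 : ℕ)
      · rfl
      · exact absurd ⟨hb, hz0⟩ hlast
    · rw [if_neg hja]
      have hmin : min (j.val - 2) a = j.val - 2 := by
        have := j.val_lt; omega
      have heq : ((min (j.val - 2) a + 2 : ℕ) : ZMod (a + 4)) = j := by
        rw [hmin, show j.val - 2 + 2 = j.val by omega]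
        exact hjcast
      simp only [heq]
  right_inv w := by
    apply Subtype.ext
    funext i
    simp only
    have hv : (((i.val + 2 : ℕ)) : ZMod (a + 4)).val = i.val + 2 :=
      val_natCast_lt (by have := i.isLt; omega)
    simp only [hv, if_neg (by omega : ¬(i.val + 2 = 0)),
      if_neg (by omega : ¬(i.val + 2 = 1)),
      if_neg (by have := i.isLt; omega : ¬(i.val + 2 = a + 3))]
    exact congrArg _ (Fin.ext (by have := i.isLt; first | omega | (simp; omega) | simp))


theorem cycGood_card (a : ℕ) :
    Nat.card (cycGood (a + 4)) = Nat.fib (a + 5) + Nat.fib (a + 3) := by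
  classical
  have e : cycGood (a + 4) ≃
      {p : cycGood (a + 4) // p.1 0 = true} ⊕ {p : cycGood (a + 4) // ¬(p.1 0 = true)} :=
    (Equiv.sumCompl (fun p : cycGood (a + 4) => p.1 0 = true)).symm
  have e2 : {p : cycGood (a + 4) // ¬(p.1 0 = true)} ≃ {p : cycGood (a + 4) // p.1 0 = false} :=
    Equiv.subtypeEquivRight (by intro p; simp)
  rw [Nat.card_congr e, Nat.card_sum, Nat.card_congr (cycB2 a),
    Nat.card_congr (e2.trans (cycB1 a)), pathGood_card, pathGood_card]
  have h1 : Nat.fib (a + 1 + 2) = Nat.fib (a + 3) := rfl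
  have h2 : Nat.fib (a + 3 + 2) = Nat.fib (a + 5) := rfl
  omega




theorem runOps_rep2 (k : ℕ) :
    runOps (List.replicate (k + 2) 2) =
      true :: true :: false :: false :: runOps (List.replicate k 2) := by
  rw [List.replicate_succ, List.replicate_succ, runOps, runOps]
  simp [List.replicate, List.map_map, Function.comp_def, Bool.not_not]

theorem runOps_getD : ∀ (k i : ℕ), i < 2 * k →
    (runOps (List.replicate k 2)).getD i false = decide (i % 4 < 2)
  | 0, i, h => by omega
  | 1, i, h => by
      interval_cases i <;> simp [runOps, List.replicate]
  | (k + 2), i, h => by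
      rw [runOps_rep2]
      by_cases h4 : i < 4
      · interval_cases i <;> simp
      · obtain ⟨j, rfl⟩ : ∃ j, i = j + 4 := ⟨i - 4, by omega⟩
        have : (true :: true :: false :: false ::
            runOps (List.replicate k 2)).getD (j + 4) false =
            (runOps (List.replicate k 2)).getD j false := rfl
        rw [this, runOps_getD k j (by omega)]
        rw [show (j + 4) % 4 = j % 4 by omega]

theorem bool_and_pair : ∀ a b c d : Bool, (c && b) = a → (a && d) = b → a = b := by decide
theorem bool_or_pair : ∀ a b c d : Bool, (c || b) = a → (a || d) = b → a = b := by decide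

section core

variable {M : ℕ} [NeZero M]

theorem cast_sub_one (k : ℕ) : ((k + M - 1 : ℕ) : ZMod M) = (k : ZMod M) - 1 := by
  have hM : 0 < M := Nat.pos_of_ne_zero (NeZero.ne M)
  rw [show k + M - 1 = k + (M - 1) by omega, Nat.cast_add,
    Nat.cast_sub (by omega : 1 ≤ M), ZMod.natCast_self, Nat.cast_one]
  ring

theorem cycleMap_apply_cast (ops x : ZMod M → Bool)
    (hops : ∀ k : ℕ, k < M → ops ↑k = decide (k % 4 < 2)) (k : ℕ) (hk : k < M) :
    cycleMap ops x ↑k =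
      (if k % 4 < 2 then x ↑(k + M - 1) && x ↑(k + 1)
       else x ↑(k + M - 1) || x ↑(k + 1)) := by
  simp only [cycleMap, hops k hk, decide_eq_true_eq]
  rw [cast_sub_one k, Nat.cast_add, Nat.cast_one]

theorem fp_iff (ops x : ZMod M → Bool)
    (hops : ∀ k : ℕ, k < M → ops ↑k = decide (k % 4 < 2)) :
    cycleMap ops x = x ↔ ∀ k : ℕ, k < M →
      (if k % 4 < 2 then x ↑(k + M - 1) && x ↑(k + 1)
       else x ↑(k + M - 1) || x ↑(k + 1)) = x ↑k := by
  rw [funext_iff]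
  constructor
  · intro h k hk
    rw [← cycleMap_apply_cast ops x hops k hk]
    exact h ↑k
  · intro h i
    have := h i.val (ZMod.val_lt i)
    rw [← cycleMap_apply_cast ops x hops i.val (ZMod.val_lt i)] at this
    rwa [ZMod.natCast_rightInverse i] at this

theorem cast_add_self (t : ℕ) : ((t + M : ℕ) : ZMod M) = (t : ZMod M) := by
  simp [Nat.cast_add, ZMod.natCast_self]

theorem fp_pair (x : ZMod M → Bool)
    (hfp : ∀ k : ℕ, k < M →
      (if k % 4 < 2 then x ↑(k + M - 1) && x ↑(k + 1)
       else x ↑(k + M - 1) || x ↑(k + 1)) = x ↑k)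
    (t : ℕ) (ht : 2 * t + 1 < M) : x ↑(2 * t + 1) = x ↑(2 * t) := by
  have h1 := hfp (2 * t) (by omega)
  have h2 := hfp (2 * t + 1) (by omega)
  have hc : ((2 * t + 1 + M - 1 : ℕ) : ZMod M) = ((2 * t : ℕ) : ZMod M) := by
    rw [show 2 * t + 1 + M - 1 = 2 * t + M by omega, cast_add_self]
  rw [hc] at h2
  rcases Nat.even_or_odd t with he | ho
  · rw [if_pos (by obtain ⟨u, rfl⟩ := he; omega)] at h1
    rw [if_pos (by obtain ⟨u, rfl⟩ := he; omega)] at h2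
    exact (bool_and_pair _ _ _ _ h1 h2).symm
  · rw [if_neg (by obtain ⟨u, rfl⟩ := ho; omega)] at h1
    rw [if_neg (by obtain ⟨u, rfl⟩ := ho; omega)] at h2
    exact (bool_or_pair _ _ _ _ h1 h2).symm

end core

def Qpred (m : ℕ) (y : ZMod m → Bool) : Prop :=
  ∀ j : ℕ, j < m → j % 2 = 0 → y ↑j = true →
    (y ↑(j + 1) = true ∧ y ↑(j + m - 1) = true)

section core2

variable {M m : ℕ} [NeZero M] [NeZero m]

theorem q_of_fp (p : ℕ) (hM : M = 4 * p + 4) (hm : m = 2 * p + 2) (x : ZMod M → Bool)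
    (hfp : ∀ k : ℕ, k < M →
      (if k % 4 < 2 then x ↑(k + M - 1) && x ↑(k + 1)
       else x ↑(k + M - 1) || x ↑(k + 1)) = x ↑k) :
    Qpred m (fun j : ZMod m => x ↑(2 * j.val)) := by
  intro j hj hj2 hyt
  simp only at hyt ⊢
  rw [ZMod.val_cast_of_lt hj] at hyt
  -- basic equations
  have h1 := hfp (2 * j) (by omega)
  rw [if_pos (by omega)] at h1
  rw [hyt] at h1
  rw [Bool.and_eq_true] at h1
  have h2 := hfp (2 * j + 1) (by omega)
  rw [if_pos (by omega)] at h2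
  have hc : ((2 * j + 1 + M - 1 : ℕ) : ZMod M) = ((2 * j : ℕ) : ZMod M) := by
    rw [show 2 * j + 1 + M - 1 = 2 * j + M by omega, cast_add_self]
  rw [hc, hyt, Bool.true_and, h1.2] at h2
  -- h2 : x ↑(2*j+2) = true, h1.1 : x ↑(2*j+M-1) = true
  have hplus : x ↑(2 * j + 2) = true := h2
  have hminus : x ↑(2 * j + M - 2) = true := by
    by_cases hj0 : j = 0
    · subst hj0
      have hpair := fp_pair x hfp (2 * p + 1) (by omega)
      have e1 : 2 * (2 * p + 1) + 1 = 2 * 0 + M - 1 := by omega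
      have e2 : 2 * (2 * p + 1) = 2 * 0 + M - 2 := by omega
      rw [e1, e2] at hpair
      rw [← hpair]
      exact h1.1
    · have hpair := fp_pair x hfp (j - 1) (by omega)
      have e1 : 2 * (j - 1) + 1 = 2 * j - 1 := by omega
      have e2 : 2 * (j - 1) = 2 * j - 2 := by omega
      rw [e1, e2] at hpair
      have hc1 : ((2 * j + M - 1 : ℕ) : ZMod M) = ((2 * j - 1 : ℕ) : ZMod M) := by
        rw [show 2 * j + M - 1 = (2 * j - 1) + M by omega, cast_add_self]
      have hc2 : ((2 * j + M - 2 : ℕ) : ZMod M) = ((2 * j - 2 : ℕ) : ZMod M) := by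
        rw [show 2 * j + M - 2 = (2 * j - 2) + M by omega, cast_add_self]
      rw [hc2, ← hpair, ← hc1]
      exact h1.1
  constructor
  · -- y ↑(j+1) = true
    by_cases hje : j + 1 = m
    · have hz : ((j + 1 : ℕ) : ZMod m) = ((0 : ℕ) : ZMod m) := by
        rw [hje]; simp [ZMod.natCast_self]
      rw [hz, ZMod.val_cast_of_lt (by omega : 0 < m)]
      have : ((2 * j + 2 : ℕ) : ZMod M) = ((2 * 0 : ℕ) : ZMod M) := by
        rw [show 2 * j + 2 = 2 * 0 + M by omega, cast_add_self]
      rw [← this]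
      exact hplus
    · rw [ZMod.val_cast_of_lt (by omega : j + 1 < m)]
      rw [show 2 * (j + 1) = 2 * j + 2 by omega]
      exact hplus
  · -- y ↑(j+m-1) = true
    by_cases hj0 : j = 0
    · subst hj0
      rw [ZMod.val_cast_of_lt (by omega : 0 + m - 1 < m)]
      rw [show 2 * (0 + m - 1) = 2 * 0 + M - 2 by omega]
      exact hminus
    · have hc3 : ((j + m - 1 : ℕ) : ZMod m) = ((j - 1 : ℕ) : ZMod m) := by
        rw [show j + m - 1 = (j - 1) + m by omega, cast_add_self]
      rw [hc3, ZMod.val_cast_of_lt (by omega : j - 1 < m)]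
      rw [show 2 * (j - 1) = 2 * j - 2 by omega]
      have hc2 : ((2 * j + M - 2 : ℕ) : ZMod M) = ((2 * j - 2 : ℕ) : ZMod M) := by
        rw [show 2 * j + M - 2 = (2 * j - 2) + M by omega, cast_add_self]
      rw [← hc2]
      exact hminus

end core2

section core3

variable {M m : ℕ} [NeZero M] [NeZero m]

theorem fp_of_q (p : ℕ) (hM : M = 4 * p + 4) (hm : m = 2 * p + 2) (y : ZMod m → Bool)
    (hq : Qpred m y) :
    ∀ k : ℕ, k < M →
      (if k % 4 < 2
       then (fun i : ZMod M => y ↑(i.val / 2)) ↑(k + M - 1) &&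
            (fun i : ZMod M => y ↑(i.val / 2)) ↑(k + 1)
       else (fun i : ZMod M => y ↑(i.val / 2)) ↑(k + M - 1) ||
            (fun i : ZMod M => y ↑(i.val / 2)) ↑(k + 1)) =
      (fun i : ZMod M => y ↑(i.val / 2)) ↑k := by
  intro k hk
  simp only
  set j := k / 2 with hj
  -- value at k
  rw [ZMod.val_cast_of_lt hk]
  -- value at k + 1
  have hx1 : ((((k + 1 : ℕ) : ZMod M)).val / 2 : ℕ) =
      (if k + 1 = M then 0 else (k + 1) / 2) := by
    by_cases hke : k + 1 = M
    · rw [if_pos hke, hke, ZMod.natCast_self, ZMod.val_zero]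
    · rw [if_neg hke, ZMod.val_cast_of_lt (by omega)]
  -- value at k + M - 1
  have hxm : (((k + M - 1 : ℕ) : ZMod M)).val / 2 =
      (if k = 0 then 2 * p + 1 else (k - 1) / 2) := by
    by_cases hk0 : k = 0
    · rw [if_pos hk0, hk0, show 0 + M - 1 = M - 1 by omega,
        ZMod.val_cast_of_lt (by omega : M - 1 < M)]
      omega
    · rw [if_neg hk0, show k + M - 1 = (k - 1) + M by omega, cast_add_self,
        ZMod.val_cast_of_lt (by omega : k - 1 < M)]
  rw [hx1, hxm]
  rcases (by omega : k % 4 = 0 ∨ k % 4 = 1 ∨ k % 4 = 2 ∨ k % 4 = 3) with h4 | h4 | h4 | h4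
  · -- k = 2j, j even: (y (j-1) && y j) = y j
    rw [if_pos (by omega), if_neg (show ¬(k + 1 = M) by omega),
      show (k + 1) / 2 = j by omega]
    by_cases hk0 : k = 0
    · rw [if_pos hk0]
      cases hyj : y ↑j with
      | false => simp
      | true =>
        have h5 := (hq j (by omega) (by omega) hyj).2
        rw [show j + m - 1 = 2 * p + 1 by omega] at h5
        push_cast at h5
        simp [h5]
    · rw [if_neg hk0]
      cases hyj : y ↑j with
      | false => simp
      | true =>
        have h5 := (hq j (by omega) (by omega) hyj).2
        have hc : ((j + m - 1 : ℕ) : ZMod m) = (((k - 1) / 2 : ℕ) : ZMod m) := by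
          rw [show j + m - 1 = (k - 1) / 2 + m by omega, cast_add_self]
        rw [hc] at h5
        simp [h5]
  · -- k = 2j + 1, j even: (y j && y (j+1)) = y j
    rw [if_pos (by omega), if_neg (show ¬(k = 0) by omega),
      if_neg (show ¬(k + 1 = M) by omega),
      show (k - 1) / 2 = j by omega, show (k + 1) / 2 = j + 1 by omega]
    cases hyj : y ↑j with
    | false => simp
    | true =>
      have h5 := (hq j (by omega) (by omega) hyj).1
      push_cast at h5
      simp [h5]
  · -- k = 2j, j odd: (y (j-1) || y j) = y j
    rw [if_neg (by omega), if_neg (show ¬(k = 0) by omega),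
      if_neg (show ¬(k + 1 = M) by omega),
      show (k + 1) / 2 = j by omega, show (k - 1) / 2 = j - 1 by omega]
    cases hym : y ↑(j - 1 : ℕ) with
    | false => simp [← hj]
    | true =>
      have h5 := (hq (j - 1) (by omega) (by omega) hym).1
      rw [show j - 1 + 1 = j by omega] at h5
      simp [h5, ← hj]
  · -- k = 2j + 1, j odd: (y j || y (j+1)) = y j
    rw [if_neg (by omega), if_neg (show ¬(k = 0) by omega),
      show (k - 1) / 2 = j by omega]
    by_cases hje : k + 1 = M
    · rw [if_pos hje]
      cases hym : y ↑(0 : ℕ) with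
      | false => simp [← hj]
      | true =>
        have h5 := (hq 0 (by omega) (by omega) hym).2
        rw [show 0 + m - 1 = j by omega] at h5
        simp [h5, ← hj]
    · rw [if_neg hje, show (k + 1) / 2 = j + 1 by omega]
      cases hym : y ↑(j + 1 : ℕ) with
      | false => simp [← hj]
      | true =>
        have h5 := (hq (j + 1) (by omega) (by omega) hym).2
        have hc : ((j + 1 + m - 1 : ℕ) : ZMod m) = ((j : ℕ) : ZMod m) := by
          rw [show j + 1 + m - 1 = j + m by omega, cast_add_self]
        rw [hc] at h5
        simp [h5, ← hj]

end core3

section core4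

variable {M m : ℕ} [NeZero M] [NeZero m]

theorem cardC1 (p : ℕ) (hM : M = 4 * p + 4) (hm : m = 2 * p + 2)
    (ops : ZMod M → Bool) (hops : ∀ k : ℕ, k < M → ops ↑k = decide (k % 4 < 2)) :
    Nat.card {x : ZMod M → Bool // cycleMap ops x = x} =
      Nat.card {y : ZMod m → Bool // Qpred m y} := by
  apply Nat.card_congr
  refine ⟨fun x => ⟨fun j : ZMod m => x.1 ↑(2 * j.val), ?_⟩,
    fun y => ⟨fun i : ZMod M => y.1 ↑(i.val / 2), ?_⟩, ?_, ?_⟩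
  · -- Qpred holds
    exact q_of_fp p hM hm x.1 ((fp_iff ops x.1 hops).mp x.2)
  · -- fixed point
    exact (fp_iff ops _ hops).mpr (fp_of_q p hM hm y.1 y.2)
  · -- left inverse
    intro x
    apply Subtype.ext
    funext i
    simp only
    have hi2 : i.val / 2 < m := by have := ZMod.val_lt i; omega
    rw [ZMod.val_cast_of_lt hi2]
    have hfp := (fp_iff ops x.1 hops).mp x.2
    rcases Nat.even_or_odd i.val with he | ho
    · rw [show 2 * (i.val / 2) = i.val by obtain ⟨u, hu⟩ := he; omega]
      rw [ZMod.natCast_rightInverse i]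
    · have hpair := fp_pair x.1 hfp (i.val / 2)
        (by obtain ⟨u, hu⟩ := ho; have := ZMod.val_lt i; omega)
      rw [show 2 * (i.val / 2) + 1 = i.val by obtain ⟨u, hu⟩ := ho; omega] at hpair
      rw [← hpair, ZMod.natCast_rightInverse i]
  · -- right inverse
    intro y
    apply Subtype.ext
    funext j
    simp only
    have hj2 : 2 * j.val < M := by have := ZMod.val_lt j; omega
    rw [ZMod.val_cast_of_lt hj2, show 2 * j.val / 2 = j.val by omega,
      ZMod.natCast_rightInverse j]

end core4



def Tmap (m : ℕ) (y : ZMod m → Bool) : ZMod m → Bool :=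
  fun j => xor (decide (j.val % 2 = 1)) (y j)

theorem Tmap_invol (m : ℕ) (y : ZMod m → Bool) : Tmap m (Tmap m y) = y := by
  funext j
  unfold Tmap
  cases decide (j.val % 2 = 1) <;> cases y j <;> rfl

section core5

variable {m : ℕ} [NeZero m]

theorem q_iff_T (p : ℕ) (hm : m = 2 * p + 2) (y : ZMod m → Bool) :
    Qpred m y ↔ ∀ j : ZMod m, ¬(Tmap m y j = true ∧ Tmap m y (j + 1) = true) := by
  rw [cycCond_iff]
  have hTval : ∀ k : ℕ, k < m → Tmap m y ↑k = xor (decide (k % 2 = 1)) (y ↑k) := by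
    intro k hk
    unfold Tmap
    rw [ZMod.val_cast_of_lt hk]
  constructor
  · intro hq k hk hc
    rcases hc with ⟨h1, h2⟩
    rw [hTval k hk] at h1
    rcases Nat.even_or_odd k with he | ho
    · -- k even
      have hke : k % 2 = 0 := by obtain ⟨u, rfl⟩ := he; omega
      have hk1 : k + 1 < m := by omega
      rw [hTval (k + 1) (by omega)] at h2
      rw [show decide (k % 2 = 1) = false by simp; omega] at h1
      rw [show decide ((k + 1) % 2 = 1) = true by simp; omega] at h2
      have hy1 : y ↑k = true := by revert h1; cases y ↑k <;> simp
      have hy2 : y ↑(k + 1) = false := by revert h2; cases y ↑(k + 1) <;> simp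
      have := (hq k hk hke hy1).1
      rw [this] at hy2
      exact absurd hy2 (by simp)
    · -- k odd
      have hko : k % 2 = 1 := by obtain ⟨u, rfl⟩ := ho; omega
      rw [show decide (k % 2 = 1) = true by simp [hko]] at h1
      have hy1 : y ↑k = false := by revert h1; cases y ↑k <;> simp
      by_cases hke : k + 1 = m
      · -- wrap around
        have hz : ((k + 1 : ℕ) : ZMod m) = ((0 : ℕ) : ZMod m) := by
          rw [show (k + 1 : ℕ) = 0 + m by omega, cast_add_self]
        rw [hz, hTval 0 (by omega)] at h2
        rw [show decide ((0 : ℕ) % 2 = 1) = false by simp] at h2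
        have hy2 : y ↑(0 : ℕ) = true := by revert h2; cases y ↑(0 : ℕ) <;> simp
        have := (hq 0 (by omega) (by omega) hy2).2
        rw [show 0 + m - 1 = k by omega] at this
        rw [this] at hy1
        exact absurd hy1 (by simp)
      · rw [hTval (k + 1) (by omega)] at h2
        rw [show decide ((k + 1) % 2 = 1) = false by simp; omega] at h2
        have hy2 : y ↑(k + 1) = true := by revert h2; cases y ↑(k + 1) <;> simp
        have := (hq (k + 1) (by omega) (by omega) hy2).2
        have hc2 : ((k + 1 + m - 1 : ℕ) : ZMod m) = ((k : ℕ) : ZMod m) := by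
          rw [show k + 1 + m - 1 = k + m by omega, cast_add_self]
        rw [hc2] at this
        rw [this] at hy1
        exact absurd hy1 (by simp)
  · intro hcc j hjm hj2 hyj
    constructor
    · -- y (j+1) = true
      have hcj := hcc j hjm
      rw [hTval j hjm, hTval (j + 1) (by omega),
        show decide (j % 2 = 1) = false by simp; omega,
        show decide ((j + 1) % 2 = 1) = true by simp; omega, hyj] at hcj
      revert hcj
      cases y ↑(j + 1) <;> simp
    · -- y (j + m - 1) = true
      by_cases hj0 : j = 0
      · subst hj0
        have hcj := hcc (m - 1) (by omega)
        rw [hTval (m - 1) (by omega),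
          show decide ((m - 1) % 2 = 1) = true by simp; omega] at hcj
        have hz : ((m - 1 + 1 : ℕ) : ZMod m) = ((0 : ℕ) : ZMod m) := by
          rw [show (m - 1 + 1 : ℕ) = 0 + m by omega, cast_add_self]
        rw [hz, hTval 0 (by omega),
          show decide ((0 : ℕ) % 2 = 1) = false by simp, hyj] at hcj
        rw [show (0 : ℕ) + m - 1 = m - 1 by omega]
        revert hcj
        cases y ↑(m - 1 : ℕ) <;> simp
      · have hcj := hcc (j - 1) (by omega)
        rw [hTval (j - 1) (by omega),
          show decide ((j - 1) % 2 = 1) = true by simp; omega,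
          show j - 1 + 1 = j by omega, hTval j hjm,
          show decide (j % 2 = 1) = false by simp; omega, hyj] at hcj
        have hc2 : ((j + m - 1 : ℕ) : ZMod m) = ((j - 1 : ℕ) : ZMod m) := by
          rw [show j + m - 1 = (j - 1) + m by omega, cast_add_self]
        rw [hc2]
        revert hcj
        cases y ↑(j - 1 : ℕ) <;> simp

theorem cardC2 (p : ℕ) (hm : m = 2 * p + 2) :
    Nat.card {y : ZMod m → Bool // Qpred m y} = Nat.card (cycGood m) := by
  apply Nat.card_congr
  refine ⟨fun y => ⟨Tmap m y.1, (q_iff_T p hm y.1).mp y.2⟩,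
    fun z => ⟨Tmap m z.1, ?_⟩, ?_, ?_⟩
  · rw [q_iff_T p hm, Tmap_invol]
    exact z.2
  · intro y
    apply Subtype.ext
    exact Tmap_invol m y.1
  · intro z
    apply Subtype.ext
    exact Tmap_invol m z.1

end core5

theorem andor_closed_chain_double_runs_count (n : ℕ) (hn : 2 ≤ n)
    (hne : Even n) :
    Frc (List.replicate (n + 2) 2) = Nat.fib (n + 3) + Nat.fib (n + 1) := by
  obtain ⟨p, hp⟩ := hne
  set L := List.replicate (n + 2) 2 with hL
  have hsum : L.sum = 4 * p + 4 := by
    rw [hL, List.sum_replicate, smul_eq_mul]; omega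
  haveI : NeZero L.sum := ⟨by omega⟩
  haveI : NeZero (2 * p + 2) := ⟨by omega⟩
  have hops : ∀ k : ℕ, k < L.sum → cOps L ↑k = decide (k % 4 < 2) := by
    intro k hk
    unfold cOps
    rw [ZMod.val_cast_of_lt hk]
    exact runOps_getD (n + 2) k (by omega)
  unfold Frc Fc
  rw [cardC1 p hsum rfl (cOps L) hops, cardC2 p rfl,
    show 2 * p + 2 = (2 * p - 2) + 4 by omega, cycGood_card (2 * p - 2),
    show 2 * p - 2 + 5 = n + 3 by omega, show 2 * p - 2 + 3 = n + 1 by omega]
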